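/- Let Γ be a finite connected simple graph and e a cycle-edge of Γ. Let Γ' be Γ with e deleted and Γ'' be Γ with e contracted. Then the number of click-equivalence classes of acyclic orientations satisfies κ(Γ) = κ(Γ') + κ(Γ''). -/

import Mathlib

variable {V : Type*}

/-- An acyclic orientation of a simple graph `G`. -/
structure AcyclicOrientation (G : SimpleGraph V) where
  dir : V → V → Prop
  dir_adj : ∀ {a b : V}, dir a b → G.Adj a b
  total : ∀ {a b : V}, G.Adj a b → dir a b ∨ dir b a
  acyclic : ∀ a : V, ¬ Relation.TransGen dir a a

namespace AcyclicOrientation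

variable {G : SimpleGraph V}

/-- `v` is a source: no edge points into `v`. -/
def IsSource (O : AcyclicOrientation G) (v : V) : Prop := ∀ a, ¬ O.dir a v

/-- `O'` is obtained from `O` by converting the source `v` into a sink. -/
def ClickAt (O : AcyclicOrientation G) (v : V) (O' : AcyclicOrientation G) : Prop :=
  O.IsSource v ∧ ∀ a b, (O'.dir a b ↔ (((a = v ∨ b = v) ∧ O.dir b a) ∨ (a ≠ v ∧ b ≠ v ∧ O.dir a b)))

/-- One source-to-sink conversion relates `O` and `O'`. -/
def IsClick (O O' : AcyclicOrientation G) : Prop := ∃ v, O.ClickAt v O'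

/-- Click-equivalence: reachability by a finite sequence of clicks. -/
def ClickEquiv (O O' : AcyclicOrientation G) : Prop :=
  Relation.ReflTransGen IsClick O O'

/-- `ClickSeq O c O'` : the list `c` is a click-sequence applicable to `O` with result `O'`. -/
inductive ClickSeq : AcyclicOrientation G → List V → AcyclicOrientation G → Prop
  | nil (O : AcyclicOrientation G) : ClickSeq O [] O
  | cons {O O' O'' : AcyclicOrientation G} {v : V} {c : List V} :
      O.ClickAt v O' → ClickSeq O' c O'' → ClickSeq O (v :: c) O''

open scoped Classical in
/-- `ν_P(O)`: forward minus backward edges of the closed walk `p` under `O`. -/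
noncomputable def nu (O : AcyclicOrientation G) {u : V} (p : G.Walk u u) : ℤ :=
  (p.darts.map (fun d => if O.dir d.toProd.1 d.toProd.2 then (1 : ℤ) else -1)).sum

/-- The `vw`-interval: vertices on a directed path from `v` to `w`. -/
def interval (O : AcyclicOrientation G) (v w : V) : Set V :=
  {a | Relation.ReflTransGen O.dir v a ∧ Relation.ReflTransGen O.dir a w}

end AcyclicOrientation

open AcyclicOrientation

/-- The setoid of click-equivalence (equivalence relation generated by clicks). -/
def clickSetoid (G : SimpleGraph V) : Setoid (AcyclicOrientation G) :=
  ⟨Relation.EqvGen IsClick, Relation.EqvGen.is_equivalence _⟩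

/-- `κ(G)`: the number of click-equivalence classes of acyclic orientations. -/
noncomputable def kappa (G : SimpleGraph V) : ℕ :=
  Nat.card (Quotient (clickSetoid G))

/-- The graph obtained from `G` by contracting the vertex set `I` to the single vertex `vI ∈ I`
(vertices of `I` other than `vI` become isolated). -/
def contractGraph (G : SimpleGraph V) (I : Set V) (vI : V) : SimpleGraph V where
  Adj a b := a ≠ b ∧
    ((a ∉ I ∧ b ∉ I ∧ G.Adj a b) ∨
     (a = vI ∧ b ∉ I ∧ ∃ x ∈ I, G.Adj x b) ∨
     (b = vI ∧ a ∉ I ∧ ∃ x ∈ I, G.Adj x a))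
  symm := by
    refine ⟨?_⟩
    rintro a b ⟨hne, h⟩
    refine ⟨hne.symm, ?_⟩
    rcases h with ⟨ha, hb, hadj⟩ | ⟨ha, hb, x, hx, hadj⟩ | ⟨hb, ha, x, hx, hadj⟩
    · exact Or.inl ⟨hb, ha, hadj.symm⟩
    · exact Or.inr (Or.inr ⟨ha, hb, x, hx, hadj⟩)
    · exact Or.inr (Or.inl ⟨hb, ha, x, hx, hadj⟩)
  loopless := ⟨by rintro a ⟨hne, -⟩; exact hne rfl⟩

/-- The orientation of the contracted graph induced by an orientation `O` of `G`. -/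
def contractDir {G : SimpleGraph V} (O : AcyclicOrientation G) (I : Set V) (vI : V) :
    V → V → Prop := fun a b =>
  (a ∉ I ∧ b ∉ I ∧ O.dir a b) ∨
  (a = vI ∧ b ∉ I ∧ ∃ x ∈ I, O.dir x b) ∨
  (b = vI ∧ a ∉ I ∧ ∃ x ∈ I, O.dir a x)

/-- The orientation `i → j` iff `i` precedes `j` in the list `l`. -/
def permDir (G : SimpleGraph V) [DecidableEq V] (l : List V) : V → V → Prop :=
  fun i j => G.Adj i j ∧ l.idxOf i < l.idxOf j

/-! ### Part 1 : potential functions and canonical representatives -/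

open Relation

namespace AcyclicOrientation

variable {G : SimpleGraph V}

theorem ext' {O O' : AcyclicOrientation G} (h : ∀ a b, O.dir a b ↔ O'.dir a b) : O = O' := by
  have hd : O.dir = O'.dir := funext fun a => funext fun b => propext (h a b)
  cases O; cases O'; cases hd; rfl

theorem not_dir_self (O : AcyclicOrientation G) (a : V) : ¬ O.dir a a :=
  fun h => O.acyclic a (TransGen.single h)

theorem not_dir_of_dir (O : AcyclicOrientation G) {a b : V} (h : O.dir a b) : ¬ O.dir b a :=
  fun h' => O.acyclic a ((TransGen.single h).tail h')

theorem dir_of_not_dir (O : AcyclicOrientation G) {a b : V} (hadj : G.Adj a b)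
    (h : ¬ O.dir b a) : O.dir a b := (O.total hadj).resolve_right h

instance [Finite V] : Finite (AcyclicOrientation G) :=
  Finite.of_injective (fun O => O.dir)
    (fun O O' h => ext' (fun a b => iff_of_eq (congrFun (congrFun h a) b)))

open Classical in
/-- The sign of a pair under an orientation. -/
noncomputable def sgn (O : AcyclicOrientation G) (a b : V) : ℤ :=
  if O.dir a b then 1 else -1

theorem sgn_eq_one {O : AcyclicOrientation G} {a b : V} (h : O.dir a b) : O.sgn a b = 1 := by
  simp [sgn, h]

theorem sgn_eq_neg_one {O : AcyclicOrientation G} {a b : V} (h : ¬ O.dir a b) :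
    O.sgn a b = -1 := by simp [sgn, h]

theorem dir_iff_of_sgn_eq {O O' : AcyclicOrientation G} {a b : V}
    (h : O.sgn a b = O'.sgn a b) : O.dir a b ↔ O'.dir a b := by
  by_cases h1 : O.dir a b <;> by_cases h2 : O'.dir a b <;>
    simp [sgn, h1, h2] at h ⊢ <;> omega

/-- `h` is a potential function for the pair `(O, O')`. -/
def Pot (O O' : AcyclicOrientation G) (h : V → ℤ) : Prop :=
  ∀ a b, G.Adj a b → O'.sgn a b - O.sgn a b = h b - h a

theorem Pot.refl (O : AcyclicOrientation G) : Pot O O 0 := by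
  intro a b _; simp

theorem Pot.symm {O O' : AcyclicOrientation G} {h : V → ℤ} (hp : Pot O O' h) :
    Pot O' O (-h) := by
  intro a b hadj; have := hp a b hadj; simp only [Pi.neg_apply]; linarith

theorem Pot.trans {O O' O'' : AcyclicOrientation G} {h h' : V → ℤ}
    (hp : Pot O O' h) (hp' : Pot O' O'' h') : Pot O O'' (h + h') := by
  intro a b hadj; have := hp a b hadj; have := hp' a b hadj
  simp only [Pi.add_apply]; linarith

theorem Pot.add_const {O O' : AcyclicOrientation G} {h : V → ℤ} (hp : Pot O O' h) (c : ℤ) :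
    Pot O O' (fun x => h x + c) := by
  intro a b hadj; have := hp a b hadj; simp only []; linarith

/-- Clicking at `u` has potential `2·𝟙ᵤ`. -/
theorem pot_clickAt [DecidableEq V] {O O' : AcyclicOrientation G} {u : V}
    (hc : O.ClickAt u O') :
    Pot O O' (fun x => if x = u then (2:ℤ) else 0) := by
  obtain ⟨hu, hf⟩ := hc
  intro a b hadj
  have hab : a ≠ b := hadj.ne
  by_cases hb : b = u
  · subst hb
    have h1 : O'.dir a b := by
      rw [hf]
      exact Or.inl ⟨Or.inr rfl, O.dir_of_not_dir hadj.symm (hu a)⟩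
    rw [sgn_eq_one h1, sgn_eq_neg_one (hu a)]
    simp [hab]
  · by_cases ha : a = u
    · subst ha
      have h0 : O.dir a b := O.dir_of_not_dir hadj (hu b)
      have h1 : ¬ O'.dir a b := by
        rw [hf]
        rintro (⟨-, hd⟩ | ⟨hne, -, -⟩)
        · exact hu b hd
        · exact hne rfl
      rw [sgn_eq_neg_one h1, sgn_eq_one h0]
      simp [hb]
    · have h1 : O'.dir a b ↔ O.dir a b := by
        rw [hf]
        constructor
        · rintro (⟨h | h, -⟩ | ⟨-, -, hd⟩)
          · exact absurd h ha
          · exact absurd h hb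
          · exact hd
        · intro hd; exact Or.inr ⟨ha, hb, hd⟩
      have : O'.sgn a b = O.sgn a b := by
        by_cases hd : O.dir a b
        · rw [sgn_eq_one hd, sgn_eq_one (h1.2 hd)]
        · rw [sgn_eq_neg_one hd, sgn_eq_neg_one (fun hx => hd (h1.1 hx))]
      rw [this]; simp [ha, hb]

theorem pot_of_eqvGen [DecidableEq V] (q : V) {O O' : AcyclicOrientation G}
    (heq : Relation.EqvGen IsClick O O') : ∃ h, Pot O O' h ∧ h q = 0 := by
  induction heq with
  | rel O1 O2 hc =>
      obtain ⟨u, hc⟩ := hc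
      refine ⟨fun x => (if x = u then (2:ℤ) else 0) - (if q = u then (2:ℤ) else 0), ?_, by simp⟩
      intro a b hadj
      have := pot_clickAt hc a b hadj
      simp only [] at this ⊢; linarith
  | refl O1 => exact ⟨0, Pot.refl O1, rfl⟩
  | symm O1 O2 _ ih =>
      obtain ⟨h, hp, hq⟩ := ih
      exact ⟨-h, hp.symm, by simp [hq]⟩
  | trans O1 O2 O3 _ _ ih1 ih2 =>
      obtain ⟨h1, hp1, hq1⟩ := ih1
      obtain ⟨h2, hp2, hq2⟩ := ih2
      exact ⟨h1 + h2, hp1.trans hp2, by simp [hq1, hq2]⟩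

end AcyclicOrientation

/-- An isolated vertex. -/
def Isol (G : SimpleGraph V) (x : V) : Prop := ∀ y, ¬ G.Adj x y

/-- Every source of `O` is `q` or isolated. -/
def GoodOri (G : SimpleGraph V) (q : V) (O : AcyclicOrientation G) : Prop :=
  ∀ u, O.IsSource u → u = q ∨ Isol G u

namespace AcyclicOrientation

variable {G : SimpleGraph V}

theorem transGen_wf [Finite V] (O : AcyclicOrientation G) :
    WellFounded (TransGen O.dir) := by
  letI : IsTrans V (TransGen O.dir) := ⟨fun _ _ _ => TransGen.trans⟩
  letI : IsIrrefl V (TransGen O.dir) := ⟨O.acyclic⟩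
  exact Finite.wellFounded_of_trans_of_irrefl _

/-- Key lemma: under a potential, `h q` is the max over the support if `O` is good. -/
theorem pot_max [Finite V] {q : V} {O O' : AcyclicOrientation G} {h : V → ℤ}
    (hO : GoodOri G q O) (hp : Pot O O' h) :
    ∀ x, (x = q ∨ ¬ Isol G x) → h x ≤ h q := by
  classical
  set S : Set V := {x | x = q ∨ ¬ Isol G x} with hS
  have hSq : q ∈ S := Or.inl rfl
  have hSfin : S.Finite := Set.toFinite S
  obtain ⟨m, hmS, hmax⟩ : ∃ m ∈ S, ∀ y ∈ S, h y ≤ h m := by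
    obtain ⟨m, hmS, hmax⟩ := hSfin.toFinset.exists_max_image h ⟨q, by simpa using hSq⟩
    exact ⟨m, by simpa using hmS, fun y hy => hmax y (by simpa using hy)⟩
  -- the set of maximizers
  set A : Set V := {x ∈ S | h x = h m} with hA
  have hAne : A.Nonempty := ⟨m, hmS, rfl⟩
  obtain ⟨u, huA, humin⟩ := (transGen_wf O).has_min A hAne
  have husrc : O.IsSource u := by
    intro a ha
    have hadj : G.Adj a u := O.dir_adj ha
    have haS : a ∈ S := Or.inr (fun hiso => hiso u hadj)
    have h1 := hp a u hadj
    rw [sgn_eq_one ha] at h1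
    have h2 : h a ≤ h u := huA.2 ▸ hmax a haS
    have h3 : O'.sgn a u ≤ 1 := by
      by_cases hd : O'.dir a u
      · rw [sgn_eq_one hd]
      · rw [sgn_eq_neg_one hd]; omega
    have h4 : h a = h u := by omega
    exact humin a ⟨haS, h4.symm ▸ huA.2⟩ (TransGen.single ha)
  have huq : u = q := by
    rcases hO u husrc with h | h
    · exact h
    · rcases huA.1 with h' | h'
      · exact h'
      · exact absurd h h'
  intro x hx
  calc h x ≤ h m := hmax x hx
  _ = h u := huA.2.symm
  _ = h q := by rw [huq]

/-- Uniqueness: two good orientations related by a potential are equal. -/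
theorem eq_of_pot [Finite V] {q : V} {O O' : AcyclicOrientation G} {h : V → ℤ}
    (hO : GoodOri G q O) (hO' : GoodOri G q O') (hp : Pot O O' h) : O = O' := by
  have h1 := pot_max hO hp
  have h2 := pot_max hO' hp.symm
  have hconst : ∀ x, (x = q ∨ ¬ Isol G x) → h x = h q := by
    intro x hx
    have := h1 x hx
    have := h2 x hx
    simp only [Pi.neg_apply] at *
    omega
  refine ext' fun a b => ?_
  by_cases hadj : G.Adj a b
  · have ha : a = q ∨ ¬ Isol G a := Or.inr (fun hiso => hiso b hadj)
    have hb : b = q ∨ ¬ Isol G b := Or.inr (fun hiso => hiso a hadj.symm)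
    have := hp a b hadj
    rw [hconst a ha, hconst b hb] at this
    exact (dir_iff_of_sgn_eq (by omega)).symm
  · exact iff_of_false (fun hd => hadj (O.dir_adj hd)) (fun hd => hadj (O'.dir_adj hd))

end AcyclicOrientation

/-! ### Clicking a source, existence of good representatives -/

namespace AcyclicOrientation

variable {G : SimpleGraph V}

/-- The result of clicking the source `u`. -/
def clickOri (O : AcyclicOrientation G) (u : V) (hu : O.IsSource u) :
    AcyclicOrientation G where
  dir a b := ((a = u ∨ b = u) ∧ O.dir b a) ∨ (a ≠ u ∧ b ≠ u ∧ O.dir a b)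
  dir_adj := by
    rintro a b (⟨-, hd⟩ | ⟨-, -, hd⟩)
    · exact (O.dir_adj hd).symm
    · exact O.dir_adj hd
  total := by
    intro a b hadj
    by_cases ha : a = u
    · subst ha
      exact Or.inr (Or.inl ⟨Or.inr rfl, O.dir_of_not_dir hadj (hu b)⟩)
    · by_cases hb : b = u
      · subst hb
        exact Or.inl (Or.inl ⟨Or.inr rfl, O.dir_of_not_dir hadj.symm (hu a)⟩)
      · rcases O.total hadj with h | h
        · exact Or.inl (Or.inr ⟨ha, hb, h⟩)
        · exact Or.inr (Or.inr ⟨hb, ha, h⟩)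
  acyclic := by
    intro a hT
    have noexit : ∀ z, ¬ (((u = u ∨ z = u) ∧ O.dir z u) ∨ (u ≠ u ∧ z ≠ u ∧ O.dir u z)) := by
      rintro z (⟨-, hd⟩ | ⟨hne, -, -⟩)
      · exact hu z hd
      · exact hne rfl
    have offdiag : ∀ x y, x ≠ u → y ≠ u →
        (((x = u ∨ y = u) ∧ O.dir y x) ∨ (x ≠ u ∧ y ≠ u ∧ O.dir x y)) → O.dir x y := by
      rintro x y hx hy (⟨hor, -⟩ | ⟨-, -, hd⟩)
      · rcases hor with h | h
        · exact absurd h hx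
        · exact absurd h hy
      · exact hd
    by_cases ha : a = u
    · subst ha
      obtain ⟨b, hstep, -⟩ := (Relation.TransGen.head'_iff).1 hT
      exact noexit b hstep
    · have aux : ∀ y, Relation.TransGen
          (fun x y => ((x = u ∨ y = u) ∧ O.dir y x) ∨ (x ≠ u ∧ y ≠ u ∧ O.dir x y)) a y →
          Relation.TransGen O.dir a y ∨ y = u := by
        intro y hTy
        induction hTy with
        | single hstep =>
            rename_i b
            by_cases hb : b = u
            · exact Or.inr hb
            · exact Or.inl (Relation.TransGen.single (offdiag _ _ ha hb hstep))
        | tail hT1 hstep ih =>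
            rename_i c b
            by_cases hc : c = u
            · subst hc; exact absurd hstep (noexit b)
            · rcases ih with h1 | h1
              · by_cases hb : b = u
                · exact Or.inr hb
                · exact Or.inl (h1.tail (offdiag _ _ hc hb hstep))
              · exact absurd h1 hc
      rcases aux a hT with h | h
      · exact O.acyclic a h
      · exact ha h

theorem clickAt_clickOri (O : AcyclicOrientation G) (u : V) (hu : O.IsSource u) :
    O.ClickAt u (O.clickOri u hu) := ⟨hu, fun _ _ => Iff.rfl⟩

/-- Two potentials with base value 0 agree on the connected support. -/
theorem pot_unique {q : V} (hq : ∀ x, ¬ Isol G x → G.Reachable q x)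
    {O O' : AcyclicOrientation G} {h h' : V → ℤ}
    (hp : Pot O O' h) (hp' : Pot O O' h') (h0 : h q = 0) (h0' : h' q = 0) :
    ∀ x, (x = q ∨ ¬ Isol G x) → h x = h' x := by
  have hedge : ∀ a b, G.Adj a b → h b - h a = h' b - h' a := by
    intro a b hadj
    have := hp a b hadj
    have := hp' a b hadj
    omega
  have walkaux : ∀ {a b : V} (p : G.Walk a b), h b - h' b = h a - h' a := by
    intro a b p
    induction p with
    | nil => omega
    | cons hadj p ih =>
        rename_i x' y' z'
        have := hedge x' y' hadj
        omega
  have hreach : ∀ x, G.Reachable q x → h x - h' x = h q - h' q := by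
    intro x hr
    obtain ⟨p⟩ := hr
    exact walkaux p
  intro x hx
  rcases hx with rfl | hx
  · rw [h0, h0']
  · have := hreach x (hq x hx)
    omega

theorem exists_good [Finite V] [DecidableEq V] {q : V}
    (hq : ∀ x, ¬ Isol G x → G.Reachable q x) (O₀ : AcyclicOrientation G) :
    ∃ O₁, Relation.EqvGen IsClick O₀ O₁ ∧ GoodOri G q O₁ := by
  classical
  let T := {O₁ : AcyclicOrientation G // Relation.EqvGen IsClick O₀ O₁}
  haveI : Nonempty T := ⟨⟨O₀, Relation.EqvGen.refl _⟩⟩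
  have hpot : ∀ O₁ : T, ∃ h, Pot O₀ O₁.1 h ∧ h q = 0 := fun O₁ => pot_of_eqvGen q O₁.2
  choose hfun hPot hq0 using hpot
  set Sf : Finset V := (Set.toFinite {x | x = q ∨ ¬ Isol G x}).toFinset with hSf
  have hmemS : ∀ x, x ∈ Sf ↔ (x = q ∨ ¬ Isol G x) := by
    intro x; rw [hSf, Set.Finite.mem_toFinset]; rfl
  obtain ⟨O₁, hmax⟩ := Finite.exists_max (fun O₁ : T => ∑ x ∈ Sf, hfun O₁ x)
  refine ⟨O₁.1, O₁.2, ?_⟩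
  intro u hsrc
  by_contra hcon
  rw [not_or] at hcon
  obtain ⟨huq, huiso⟩ := hcon
  set O₂ := O₁.1.clickOri u hsrc with hO₂
  have h2 : Relation.EqvGen IsClick O₀ O₂ :=
    Relation.EqvGen.trans _ _ _ O₁.2
      (Relation.EqvGen.rel _ _ ⟨u, clickAt_clickOri _ u hsrc⟩)
  have hP2 : Pot O₀ O₂ (fun x => hfun O₁ x + (if x = u then 2 else 0)) :=
    (hPot O₁).trans (pot_clickAt (clickAt_clickOri _ u hsrc))
  have hq2 : hfun O₁ q + (if q = u then (2:ℤ) else 0) = 0 := by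
    rw [if_neg (fun h => huq h.symm), hq0 O₁]; ring
  have hagree := pot_unique hq (hPot ⟨O₂, h2⟩) hP2 (hq0 _) hq2
  have hsum : (∑ x ∈ Sf, hfun ⟨O₂, h2⟩ x) = (∑ x ∈ Sf, hfun O₁ x) + 2 := by
    have : ∀ x ∈ Sf, hfun ⟨O₂, h2⟩ x = hfun O₁ x + (if x = u then 2 else 0) := by
      intro x hx; exact hagree x ((hmemS x).1 hx)
    rw [Finset.sum_congr rfl this, Finset.sum_add_distrib, Finset.sum_ite_eq' Sf u]
    rw [if_pos ((hmemS u).2 (Or.inr huiso))]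
  have := hmax ⟨O₂, h2⟩
  simp only [hsum] at this
  omega

/-- κ equals the number of good orientations. -/
theorem kappa_eq_card [Finite V] [DecidableEq V] {G : SimpleGraph V} {q : V}
    (hq : ∀ x, ¬ Isol G x → G.Reachable q x) :
    kappa G = Nat.card {O : AcyclicOrientation G // GoodOri G q O} := by
  refine (Nat.card_eq_of_bijective
    (fun O : {O : AcyclicOrientation G // GoodOri G q O} =>
      (Quotient.mk (clickSetoid G) O.1)) ⟨?_, ?_⟩).symm
  · intro O O' heq
    have hE : Relation.EqvGen IsClick O.1 O'.1 := Quotient.exact heq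
    obtain ⟨h, hp, -⟩ := pot_of_eqvGen q hE
    exact Subtype.ext (eq_of_pot O.2 O'.2 hp)
  · intro c
    induction c using Quotient.ind with
    | _ O₀ =>
        obtain ⟨O₁, hE, hgood⟩ := exists_good hq O₀
        exact ⟨⟨O₁, hgood⟩, Quotient.sound (Relation.EqvGen.symm _ _ hE)⟩

end AcyclicOrientation

/-! ### Part 2 : the four constructions on orientations -/

namespace DelCon

open Relation AcyclicOrientation

variable {G : SimpleGraph V} {v w : V}

/-- Restriction of an orientation to the deleted graph. -/
def del (v w : V) (O : AcyclicOrientation G) :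
    AcyclicOrientation (G.deleteEdges {s(v,w)}) where
  dir a b := (G.deleteEdges {s(v,w)}).Adj a b ∧ O.dir a b
  dir_adj h := h.1
  total hadj := by
    rcases O.total ((SimpleGraph.deleteEdges_adj.1 hadj).1) with h | h
    · exact Or.inl ⟨hadj, h⟩
    · exact Or.inr ⟨hadj.symm, h⟩
  acyclic a h := O.acyclic a (TransGen.mono (fun _ _ hh => hh.2) _ _ h)

theorem del_dir {v w : V} {O : AcyclicOrientation G} {a b : V} :
    (del v w O).dir a b ↔ ((G.deleteEdges {s(v,w)}).Adj a b ∧ O.dir a b) := Iff.rfl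

/-- Adding one oriented edge to an acyclic relation keeps it acyclic. -/
theorem transGen_union_single {r : V → V → Prop} {x y : V}
    (hacyc : ∀ a, ¬ Relation.TransGen r a a)
    (hno : ¬ Relation.ReflTransGen r y x) :
    ∀ a, ¬ Relation.TransGen (fun s t => r s t ∨ (s = x ∧ t = y)) a a := by
  have aux : ∀ a b, Relation.TransGen (fun s t => r s t ∨ (s = x ∧ t = y)) a b →
      Relation.TransGen r a b ∨ (Relation.ReflTransGen r a x ∧ Relation.ReflTransGen r y b) := by
    intro a b hT
    induction hT with
    | single h =>
        rcases h with h | ⟨rfl, rfl⟩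
        · exact Or.inl (TransGen.single h)
        · exact Or.inr ⟨ReflTransGen.refl, ReflTransGen.refl⟩
    | tail hT hstep ih =>
        rename_i c b
        rcases hstep with h | ⟨rfl, rfl⟩
        · rcases ih with h1 | ⟨h1, h2⟩
          · exact Or.inl (h1.tail h)
          · exact Or.inr ⟨h1, h2.tail h⟩
        · rcases ih with h1 | ⟨h1, h2⟩
          · exact Or.inr ⟨h1.to_reflTransGen, ReflTransGen.refl⟩
          · exact absurd h2 hno
  intro a hT
  rcases aux a a hT with h | ⟨h1, h2⟩
  · exact hacyc a h
  · exact hno (h2.trans h1)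

/-- Extending an orientation of the deleted graph across the edge `x → y`,
where `s(x,y) = s(v,w)`. -/
def extOri (O' : AcyclicOrientation (G.deleteEdges {s(v,w)})) (x y : V)
    (hxy : G.Adj x y) (he : s(x,y) = s(v,w))
    (hno : ¬ Relation.ReflTransGen O'.dir y x) : AcyclicOrientation G where
  dir a b := O'.dir a b ∨ (a = x ∧ b = y)
  dir_adj h := by
    rcases h with h | ⟨rfl, rfl⟩
    · exact (SimpleGraph.deleteEdges_adj.1 (O'.dir_adj h)).1
    · exact hxy
  total := by
    intro a b hadj
    by_cases hs : s(a,b) = s(v,w)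
    · rw [← he] at hs
      rcases Sym2.eq_iff.1 hs with ⟨rfl, rfl⟩ | ⟨rfl, rfl⟩
      · exact Or.inl (Or.inr ⟨rfl, rfl⟩)
      · exact Or.inr (Or.inr ⟨rfl, rfl⟩)
    · have hadj' : (G.deleteEdges {s(v,w)}).Adj a b :=
        SimpleGraph.deleteEdges_adj.2 ⟨hadj, by simpa using hs⟩
      rcases O'.total hadj' with h | h
      · exact Or.inl (Or.inl h)
      · exact Or.inr (Or.inl h)
  acyclic := transGen_union_single O'.acyclic hno

theorem extOri_dir {O' : AcyclicOrientation (G.deleteEdges {s(v,w)})} {x y : V}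
    {hxy : G.Adj x y} {he : s(x,y) = s(v,w)} {hno : ¬ Relation.ReflTransGen O'.dir y x}
    {a b : V} : (extOri O' x y hxy he hno).dir a b ↔ (O'.dir a b ∨ (a = x ∧ b = y)) := Iff.rfl

/-- The contraction projection. -/
def piMap (v w : V) [DecidableEq V] : V → V := fun x => if x = w then v else x

section Pull

variable [DecidableEq V]

theorem piMap_w : piMap v w w = v := by simp [piMap]
theorem piMap_of_ne {x : V} (h : x ≠ w) : piMap v w x = x := by simp [piMap, h]
theorem piMap_v (hne : v ≠ w) : piMap v w v = v := piMap_of_ne hne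

theorem adj_piMap (hvw : G.Adj v w) {a b : V} (h : (G.deleteEdges {s(v,w)}).Adj a b) :
    (contractGraph G {v, w} v).Adj (piMap v w a) (piMap v w b) := by
  have hG : G.Adj a b := (SimpleGraph.deleteEdges_adj.1 h).1
  have hs : s(a,b) ≠ s(v,w) := by
    have := (SimpleGraph.deleteEdges_adj.1 h).2
    simpa using this
  have hI : ∀ x : V, x ∈ ({v, w} : Set V) ↔ (x = v ∨ x = w) := by
    intro x; simp
  by_cases ha : a ∈ ({v, w} : Set V)
  · by_cases hb : b ∈ ({v, w} : Set V)
    · exfalso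
      rcases (hI a).1 ha with rfl | rfl <;> rcases (hI b).1 hb with rfl | rfl
      · exact hG.ne rfl
      · exact hs rfl
      · exact hs Sym2.eq_swap
      · exact hG.ne rfl
    · -- a ∈ I, b ∉ I
      have hb' : b ≠ w := fun hh => hb ((hI b).2 (Or.inr hh))
      have hpa : piMap v w a = v := by
        rcases (hI a).1 ha with rfl | rfl
        · exact piMap_v hvw.ne
        · exact piMap_w
      rw [hpa, piMap_of_ne hb']
      refine ⟨fun hh => hb ((hI b).2 (Or.inl hh.symm)), Or.inr (Or.inl ⟨rfl, hb, a, ha, hG⟩)⟩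
  · by_cases hb : b ∈ ({v, w} : Set V)
    · have ha' : a ≠ w := fun hh => ha ((hI a).2 (Or.inr hh))
      have hpb : piMap v w b = v := by
        rcases (hI b).1 hb with rfl | rfl
        · exact piMap_v hvw.ne
        · exact piMap_w
      rw [hpb, piMap_of_ne ha']
      refine ⟨fun hh => ha ((hI a).2 (Or.inl hh)), Or.inr (Or.inr ⟨rfl, ha, b, hb, hG.symm⟩)⟩
    · have ha' : a ≠ w := fun hh => ha ((hI a).2 (Or.inr hh))
      have hb' : b ≠ w := fun hh => hb ((hI b).2 (Or.inr hh))
      rw [piMap_of_ne ha', piMap_of_ne hb']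
      exact ⟨hG.ne, Or.inl ⟨ha, hb, hG⟩⟩

/-- Pulling back an orientation of the contraction to the deleted graph. -/
def pullb (hvw : G.Adj v w) (O'' : AcyclicOrientation (contractGraph G {v, w} v)) :
    AcyclicOrientation (G.deleteEdges {s(v,w)}) where
  dir a b := (G.deleteEdges {s(v,w)}).Adj a b ∧ O''.dir (piMap v w a) (piMap v w b)
  dir_adj h := h.1
  total := by
    intro a b hadj
    rcases O''.total (adj_piMap hvw hadj) with h | h
    · exact Or.inl ⟨hadj, h⟩
    · exact Or.inr ⟨hadj.symm, h⟩
  acyclic := by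
    intro a hT
    exact O''.acyclic (piMap v w a)
      (TransGen.lift (piMap v w) (fun _ _ hh => hh.2) _ _ hT)

theorem pullb_dir {hvw : G.Adj v w} {O'' : AcyclicOrientation (contractGraph G {v, w} v)}
    {a b : V} : (pullb hvw O'').dir a b ↔
      ((G.deleteEdges {s(v,w)}).Adj a b ∧ O''.dir (piMap v w a) (piMap v w b)) := Iff.rfl

end Pull

end DelCon

/-! ### The contraction of an orientation -/

namespace DelCon

open Relation AcyclicOrientation

variable {G : SimpleGraph V} {v w : V}

section Con

variable (O' : AcyclicOrientation (G.deleteEdges {s(v,w)}))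

/-- Membership in the fibre of the projection. -/
def fibmem (v w : V) (x xt : V) : Prop := xt = x ∨ (x = v ∧ xt = w)

theorem fibmem_self (x : V) : fibmem v w x x := Or.inl rfl

theorem fibmem_eq {x xt : V} (h : fibmem v w x xt) (hx : x ≠ v) : xt = x := by
  rcases h with h | ⟨h, -⟩
  · exact h
  · exact absurd h hx


variable (v w) in
/-- contraction steps not leaving `v`. -/
abbrev C0 (O' : AcyclicOrientation (G.deleteEdges {s(v,w)})) : V → V → Prop :=
  fun s t => contractDir O' ({v, w} : Set V) v s t ∧ s ≠ v

theorem cd_lift {a b : V} (h : contractDir O' ({v, w} : Set V) v a b) :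
    ∃ at' bt, fibmem v w a at' ∧ fibmem v w b bt ∧ O'.dir at' bt := by
  rcases h with ⟨-, -, h⟩ | ⟨ha, hb, x, hxI, h⟩ | ⟨hb, ha, x, hxI, h⟩
  · exact ⟨a, b, fibmem_self a, fibmem_self b, h⟩
  · refine ⟨x, b, ?_, fibmem_self b, h⟩
    rcases hxI with rfl | hx
    · exact Or.inl ha.symm
    · exact Or.inr ⟨ha, hx⟩
  · refine ⟨a, x, fibmem_self a, ?_, h⟩
    rcases hxI with rfl | hx
    · exact Or.inl hb.symm
    · exact Or.inr ⟨hb, hx⟩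

theorem cd_out_v (hne : v ≠ w) {b : V} (h : contractDir O' ({v, w} : Set V) v v b) : b ∉ ({v, w} : Set V) := by
  rcases h with ⟨ha, -, -⟩ | ⟨-, hb, -⟩ | ⟨-, ha, -⟩
  · exact absurd (by simp) ha
  · exact hb
  · exact absurd (by simp) ha

theorem cd_ne_w (hne : v ≠ w) {a b : V} (h : contractDir O' ({v, w} : Set V) v a b) : a ≠ w ∧ b ≠ w := by
  rcases h with ⟨ha, hb, -⟩ | ⟨ha, hb, -⟩ | ⟨hb, ha, -⟩
  · exact ⟨fun hh => ha (by simp [hh]), fun hh => hb (by simp [hh])⟩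
  · exact ⟨fun hh => hne (by rw [← ha, hh]), fun hh => hb (by simp [hh])⟩
  · exact ⟨fun hh => ha (by simp [hh]), fun hh => hne (by rw [← hb, hh])⟩

theorem fibcon (hv : ¬ Relation.ReflTransGen O'.dir v w)
    (hw : ¬ Relation.ReflTransGen O'.dir w v) {xt yt : V}
    (hx : fibmem v w v xt) (hy : fibmem v w v yt)
    (hT : Relation.TransGen O'.dir xt yt) : False := by
  have hx' : xt = v ∨ xt = w := by
    rcases hx with h | ⟨-, h⟩
    · exact Or.inl h
    · exact Or.inr h
  have hy' : yt = v ∨ yt = w := by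
    rcases hy with h | ⟨-, h⟩
    · exact Or.inl h
    · exact Or.inr h
  rcases hx' with rfl | rfl <;> rcases hy' with rfl | rfl
  · exact O'.acyclic _ hT
  · exact hv hT.to_reflTransGen
  · exact hw hT.to_reflTransGen
  · exact O'.acyclic _ hT

theorem lc1 {a b : V} (ha : a ≠ v) (hT : Relation.TransGen (C0 v w O') a b) :
    ∃ bt, fibmem v w b bt ∧ Relation.TransGen O'.dir a bt := by
  induction hT with
  | single h =>
      obtain ⟨at', bt, fa, fb, hd⟩ := cd_lift O' h.1
      rw [fibmem_eq fa ha] at hd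
      exact ⟨bt, fb, TransGen.single hd⟩
  | tail hT hstep ih =>
      rename_i c b
      have hc : c ≠ v := hstep.2
      obtain ⟨ct, fc, TG⟩ := ih
      rw [fibmem_eq fc hc] at TG
      obtain ⟨ct', bt, fc', fb, hd⟩ := cd_lift O' hstep.1
      rw [fibmem_eq fc' hc] at hd
      exact ⟨bt, fb, TG.tail hd⟩

theorem lc2 {a b : V} (hT : Relation.TransGen (contractDir O' ({v, w} : Set V) v) a b) :
    Relation.TransGen (C0 v w O') a b ∨
      ∃ y, Relation.ReflTransGen (contractDir O' ({v, w} : Set V) v) a v ∧ contractDir O' ({v, w} : Set V) v v y ∧ Relation.ReflTransGen (C0 v w O') y b := by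
  induction hT with
  | single h =>
      by_cases ha : a = v
      · subst ha; exact Or.inr ⟨_, ReflTransGen.refl, h, ReflTransGen.refl⟩
      · exact Or.inl (TransGen.single ⟨h, ha⟩)
  | tail hT hstep ih =>
      rename_i c b
      by_cases hc : c = v
      · subst hc
        exact Or.inr ⟨b, hT.to_reflTransGen, hstep, ReflTransGen.refl⟩
      · rcases ih with h1 | ⟨y, h1, h2, h3⟩
        · exact Or.inl (h1.tail ⟨hstep, hc⟩)
        · exact Or.inr ⟨y, h1, h2, h3.tail ⟨hstep, hc⟩⟩

theorem con_acyclic (hne : v ≠ w) (hv : ¬ Relation.ReflTransGen O'.dir v w)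
    (hw : ¬ Relation.ReflTransGen O'.dir w v) :
    ∀ a, ¬ Relation.TransGen (contractDir O' ({v, w} : Set V) v) a a := by
  have main : ¬ Relation.TransGen (contractDir O' ({v, w} : Set V) v) v v := by
    intro hvv
    rcases lc2 O' hvv with hT0 | ⟨y', -, h2', h3'⟩
    · obtain ⟨b, hstep, -⟩ := TransGen.head'_iff.1 hT0
      exact hstep.2 rfl
    · have hy' : y' ∉ ({v, w} : Set V) := cd_out_v O' hne h2'
      have hyv : y' ≠ v := fun hh => hy' (by simp [hh])
      obtain ⟨xt, bt, fx, fb, hd⟩ := cd_lift O' h2'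
      rw [fibmem_eq fb hyv] at hd
      rcases reflTransGen_iff_eq_or_transGen.1 h3' with hh | hT1
      · exact hyv hh.symm
      · obtain ⟨vt, fv, TG⟩ := lc1 O' hyv hT1
        exact fibcon O' hv hw fx fv (TransGen.head hd TG)
  intro a hT
  rcases lc2 O' hT with hT0 | ⟨y, h1, h2, h3⟩
  · obtain ⟨b, hstep, -⟩ := TransGen.head'_iff.1 hT0
    have ha : a ≠ v := hstep.2
    obtain ⟨at', fa, TG⟩ := lc1 O' ha hT0
    rw [fibmem_eq fa ha] at TG
    exact O'.acyclic a TG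
  · -- assemble a cycle at v
    have hCyb : Relation.ReflTransGen (contractDir O' ({v, w} : Set V) v) y a := ReflTransGen.mono (fun _ _ hh => hh.1) _ _ h3
    exact main ((TransGen.single h2).trans_left (hCyb.trans h1))

/-- The contracted orientation. -/
def conOri (hvw : G.Adj v w) (hv : ¬ Relation.ReflTransGen O'.dir v w)
    (hw : ¬ Relation.ReflTransGen O'.dir w v) :
    AcyclicOrientation (contractGraph G {v, w} v) where
  dir := contractDir O' {v, w} v
  dir_adj := by
    rintro a b (⟨ha, hb, h⟩ | ⟨ha, hb, x, hxI, h⟩ | ⟨hb, ha, x, hxI, h⟩)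
    · have hG : G.Adj a b := (SimpleGraph.deleteEdges_adj.1 (O'.dir_adj h)).1
      exact ⟨hG.ne, Or.inl ⟨ha, hb, hG⟩⟩
    · have hG : G.Adj x b := (SimpleGraph.deleteEdges_adj.1 (O'.dir_adj h)).1
      refine ⟨fun hh => hb (by rw [← hh, ha]; simp), Or.inr (Or.inl ⟨ha, hb, x, hxI, hG⟩)⟩
    · have hG : G.Adj a x := (SimpleGraph.deleteEdges_adj.1 (O'.dir_adj h)).1
      refine ⟨fun hh => ha (by rw [hh, hb]; simp), Or.inr (Or.inr ⟨hb, ha, x, hxI, hG.symm⟩)⟩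
  total := by
    rintro a b ⟨hne', (⟨ha, hb, hG⟩ | ⟨ha, hb, x, hxI, hG⟩ | ⟨hb, ha, x, hxI, hG⟩)⟩
    · have hadj' : (G.deleteEdges {s(v,w)}).Adj a b := by
        refine SimpleGraph.deleteEdges_adj.2 ⟨hG, ?_⟩
        simp only [Set.mem_singleton_iff, Sym2.eq_iff]
        rintro (⟨rfl, rfl⟩ | ⟨rfl, rfl⟩)
        · exact ha (by simp)
        · exact ha (by simp)
      rcases O'.total hadj' with h | h
      · exact Or.inl (Or.inl ⟨ha, hb, h⟩)
      · exact Or.inr (Or.inl ⟨hb, ha, h⟩)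
    · have hadj' : (G.deleteEdges {s(v,w)}).Adj x b := by
        refine SimpleGraph.deleteEdges_adj.2 ⟨hG, ?_⟩
        simp only [Set.mem_singleton_iff, Sym2.eq_iff]
        rintro (⟨rfl, rfl⟩ | ⟨rfl, rfl⟩)
        · exact hb (by simp)
        · exact hb (by simp)
      rcases O'.total hadj' with h | h
      · exact Or.inl (Or.inr (Or.inl ⟨ha, hb, x, hxI, h⟩))
      · exact Or.inr (Or.inr (Or.inr ⟨ha, hb, x, hxI, h⟩))
    · have hadj' : (G.deleteEdges {s(v,w)}).Adj a x := by
        refine SimpleGraph.deleteEdges_adj.2 ⟨hG.symm, ?_⟩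
        simp only [Set.mem_singleton_iff, Sym2.eq_iff]
        rintro (⟨rfl, rfl⟩ | ⟨rfl, rfl⟩)
        · exact ha (by simp)
        · exact ha (by simp)
      rcases O'.total hadj' with h | h
      · exact Or.inl (Or.inr (Or.inr ⟨hb, ha, x, hxI, h⟩))
      · exact Or.inr (Or.inr (Or.inl ⟨hb, ha, x, hxI, h⟩))
  acyclic := con_acyclic O' hvw.ne hv hw

theorem conOri_dir {hvw : G.Adj v w} {hv : ¬ Relation.ReflTransGen O'.dir v w}
    {hw : ¬ Relation.ReflTransGen O'.dir w v} {a b : V} :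
    (conOri O' hvw hv hw).dir a b ↔ contractDir O' {v, w} v a b := Iff.rfl

end Con

end DelCon

/-! ### Transfer lemmas in the deletion-contraction setting -/

namespace DelCon

open Relation AcyclicOrientation

variable {G : SimpleGraph V} {v w : V}

theorem mem_I {x : V} : x ∈ ({v, w} : Set V) ↔ (x = v ∨ x = w) := by simp

theorem adj_del_iff {a b : V} :
    (G.deleteEdges {s(v,w)}).Adj a b ↔ (G.Adj a b ∧ s(a,b) ≠ s(v,w)) := by
  rw [SimpleGraph.deleteEdges_adj]; simp

theorem adj_del_of_notmem {a b : V} (h : G.Adj a b) (ha : a ∉ ({v, w} : Set V)) :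
    (G.deleteEdges {s(v,w)}).Adj a b := by
  refine adj_del_iff.2 ⟨h, fun hs => ?_⟩
  rcases Sym2.eq_iff.1 hs with ⟨rfl, rfl⟩ | ⟨rfl, rfl⟩
  · exact ha (mem_I.2 (Or.inl rfl))
  · exact ha (mem_I.2 (Or.inr rfl))

theorem adj_del_of_notmem' {a b : V} (h : G.Adj a b) (hb : b ∉ ({v, w} : Set V)) :
    (G.deleteEdges {s(v,w)}).Adj a b := (adj_del_of_notmem h.symm hb).symm

theorem no_adj_del_I {a b : V} (ha : a ∈ ({v, w} : Set V)) (hb : b ∈ ({v, w} : Set V)) :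
    ¬ (G.deleteEdges {s(v,w)}).Adj a b := by
  intro h
  rcases adj_del_iff.1 h with ⟨hG, hs⟩
  rcases mem_I.1 ha with rfl | rfl <;> rcases mem_I.1 hb with rfl | rfl
  · exact hG.ne rfl
  · exact hs rfl
  · exact hs Sym2.eq_swap
  · exact hG.ne rfl

/-- In the contraction, `w` is isolated. -/
theorem isol_con_w (hne : v ≠ w) : Isol (contractGraph G {v, w} v) w := by
  rintro y ⟨hney, (⟨ha, -, -⟩ | ⟨ha, -, -⟩ | ⟨hb, ha, -⟩)⟩
  · exact ha (mem_I.2 (Or.inr rfl))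
  · exact hne (ha.symm)
  · exact ha (mem_I.2 (Or.inr rfl))

theorem con_dir_ne_w {O'' : AcyclicOrientation (contractGraph G {v, w} v)} (hne : v ≠ w)
    {a b : V} (h : O''.dir a b) : a ≠ w ∧ b ≠ w := by
  have hadj := O''.dir_adj h
  constructor
  · rintro rfl; exact isol_con_w hne _ hadj
  · rintro rfl; exact isol_con_w hne _ hadj.symm

section WithHyp

theorem reach_del (hcyc : (G.deleteEdges {s(v,w)}).Reachable v w) : ∀ {x y : V}, G.Reachable x y →
    (G.deleteEdges {s(v,w)}).Reachable x y := by
  intro x y h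
  obtain ⟨p⟩ := h
  induction p with
  | nil => exact SimpleGraph.Reachable.refl _
  | cons hadj p ih =>
      rename_i x' y' z'
      refine SimpleGraph.Reachable.trans ?_ ih
      by_cases hs : s(x', y') = s(v, w)
      · rcases Sym2.eq_iff.1 hs with ⟨rfl, rfl⟩ | ⟨rfl, rfl⟩
        · exact hcyc
        · exact hcyc.symm
      · exact SimpleGraph.Adj.reachable (adj_del_iff.2 ⟨hadj, hs⟩)

theorem exists_adj_of_reachable_ne {H : SimpleGraph V} {x y : V}
    (h : H.Reachable x y) (hne : x ≠ y) : ∃ z, H.Adj x z := by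
  obtain ⟨p⟩ := h
  cases p with
  | nil => exact absurd rfl hne
  | cons hadj _ => exact ⟨_, hadj⟩

theorem not_isol_del_v (hvw : G.Adj v w) (hcyc : (G.deleteEdges {s(v,w)}).Reachable v w) : ¬ Isol (G.deleteEdges {s(v,w)}) v := by
  obtain ⟨z, hz⟩ := exists_adj_of_reachable_ne hcyc hvw.ne
  exact fun h => h z hz

theorem not_isol_del_w (hvw : G.Adj v w) (hcyc : (G.deleteEdges {s(v,w)}).Reachable v w) : ¬ Isol (G.deleteEdges {s(v,w)}) w := by
  obtain ⟨z, hz⟩ := exists_adj_of_reachable_ne hcyc.symm (Ne.symm hvw.ne)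
  exact fun h => h z hz

theorem isol_del_of_isol {x : V} (h : Isol G x) : Isol (G.deleteEdges {s(v,w)}) x :=
  fun y hy => h y (adj_del_iff.1 hy).1

theorem isol_of_isol_del (hvw : G.Adj v w) (hcyc : (G.deleteEdges {s(v,w)}).Reachable v w) {x : V} (h : Isol (G.deleteEdges {s(v,w)}) x) : Isol G x := by
  intro y hy
  by_cases hs : s(x, y) = s(v, w)
  · rcases Sym2.eq_iff.1 hs with ⟨rfl, rfl⟩ | ⟨rfl, rfl⟩
    · exact not_isol_del_v hvw hcyc h
    · exact not_isol_del_w hvw hcyc h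
  · exact h y (adj_del_iff.2 ⟨hy, hs⟩)

theorem isol_con_of_isol (hvw : G.Adj v w) {x : V} (h : Isol G x) :
    Isol (contractGraph G {v, w} v) x := by
  rintro y ⟨hney, (⟨ha, hb, hG⟩ | ⟨ha, hb, z, hzI, hG⟩ | ⟨hb, ha, z, hzI, hG⟩)⟩
  · exact h y hG
  · exact h w (by rw [ha]; exact hvw)
  · exact h z hG.symm

theorem isol_of_isol_con {x : V} (hx : x ∉ ({v, w} : Set V))
    (h : Isol (contractGraph G {v, w} v) x) : Isol G x := by
  intro y hy
  by_cases hyI : y ∈ ({v, w} : Set V)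
  · refine h v ⟨fun hh => hx (hh ▸ mem_I.2 (Or.inl rfl)), Or.inr (Or.inr ⟨rfl, hx, y, hyI, hy.symm⟩)⟩
  · exact h y ⟨hy.ne, Or.inl ⟨hx, hyI, hy⟩⟩

section DecEq

variable [DecidableEq V]

theorem adj_con_of_adj (hne : v ≠ w) {a b : V} (h : G.Adj a b) :
    piMap v w a = piMap v w b ∨
      (contractGraph G {v, w} v).Adj (piMap v w a) (piMap v w b) := by
  by_cases ha : a ∈ ({v, w} : Set V)
  · by_cases hb : b ∈ ({v, w} : Set V)
    · left
      have hpa : piMap v w a = v := by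
        rcases mem_I.1 ha with rfl | rfl
        · exact piMap_v hne
        · exact piMap_w
      have hpb : piMap v w b = v := by
        rcases mem_I.1 hb with rfl | rfl
        · exact piMap_v hne
        · exact piMap_w
      rw [hpa, hpb]
    · right
      have hpa : piMap v w a = v := by
        rcases mem_I.1 ha with rfl | rfl
        · exact piMap_v hne
        · exact piMap_w
      have hb' : b ≠ w := fun hh => hb (mem_I.2 (Or.inr hh))
      rw [hpa, piMap_of_ne hb']
      exact ⟨fun hh => hb (mem_I.2 (Or.inl hh.symm)), Or.inr (Or.inl ⟨rfl, hb, a, ha, h⟩)⟩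
  · by_cases hb : b ∈ ({v, w} : Set V)
    · right
      have hpb : piMap v w b = v := by
        rcases mem_I.1 hb with rfl | rfl
        · exact piMap_v hne
        · exact piMap_w
      have ha' : a ≠ w := fun hh => ha (mem_I.2 (Or.inr hh))
      rw [hpb, piMap_of_ne ha']
      exact ⟨fun hh => ha (mem_I.2 (Or.inl hh)), Or.inr (Or.inr ⟨rfl, ha, b, hb, h.symm⟩)⟩
    · right
      have ha' : a ≠ w := fun hh => ha (mem_I.2 (Or.inr hh))
      have hb' : b ≠ w := fun hh => hb (mem_I.2 (Or.inr hh))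
      rw [piMap_of_ne ha', piMap_of_ne hb']
      exact ⟨h.ne, Or.inl ⟨ha, hb, h⟩⟩

theorem reach_con (hne : v ≠ w) : ∀ {x y : V}, G.Reachable x y →
    (contractGraph G {v, w} v).Reachable (piMap v w x) (piMap v w y) := by
  intro x y h
  obtain ⟨p⟩ := h
  induction p with
  | nil => exact SimpleGraph.Reachable.refl _
  | cons hadj p ih =>
      rename_i x' y' z'
      refine SimpleGraph.Reachable.trans ?_ ih
      rcases adj_con_of_adj hne hadj with he | hadj'
      · rw [he]
      · exact hadj'.reachable

end DecEq

end WithHyp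

end DelCon

/-! ### Sources and round trips -/

namespace DelCon

open Relation AcyclicOrientation

variable {G : SimpleGraph V} {v w : V}

theorem isSource_of_isSource_del {O : AcyclicOrientation G} {x : V}
    (hx : x ∉ ({v, w} : Set V)) (h : (del v w O).IsSource x) : O.IsSource x := by
  intro a ha
  exact h a ⟨adj_del_of_notmem' (O.dir_adj ha) hx, ha⟩

theorem not_isSource_w {O : AcyclicOrientation G} (hvw : G.Adj v w)
    (hO : GoodOri G v O) : ¬ O.IsSource w := by
  intro h
  rcases hO w h with hh | hh
  · exact hvw.ne hh.symm
  · exact hh v hvw.symm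

theorem good_del_caseA (hvw : G.Adj v w) (hcyc : (G.deleteEdges {s(v,w)}).Reachable v w)
    {O : AcyclicOrientation G} (hO : GoodOri G v O) (hdir : O.dir w v) :
    GoodOri (G.deleteEdges {s(v,w)}) v (del v w O) := by
  intro x hsrc
  by_cases hxv : x = v
  · exact Or.inl hxv
  · by_cases hxw : x = w
    · subst hxw
      exfalso
      refine not_isSource_w hvw hO (fun a ha => ?_)
      by_cases hav : a = v
      · subst hav; exact O.not_dir_of_dir hdir ha
      · refine hsrc a ⟨adj_del_iff.2 ⟨O.dir_adj ha, fun hs => ?_⟩, ha⟩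
        rcases Sym2.eq_iff.1 hs with ⟨h1, h2⟩ | ⟨h1, h2⟩
        · exact hav h1
        · exact hvw.ne h2.symm
    · have hx : x ∉ ({v, w} : Set V) := fun hh => (mem_I.1 hh).elim hxv hxw
      rcases hO x (isSource_of_isSource_del hx hsrc) with h | h
      · exact Or.inl h
      · exact Or.inr (isol_del_of_isol h)

theorem good_del_caseB (hvw : G.Adj v w) (hcyc : (G.deleteEdges {s(v,w)}).Reachable v w)
    {O : AcyclicOrientation G} (hO : GoodOri G v O)
    (hRT : Relation.ReflTransGen (del v w O).dir v w) :
    GoodOri (G.deleteEdges {s(v,w)}) v (del v w O) := by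
  intro x hsrc
  by_cases hxv : x = v
  · exact Or.inl hxv
  · by_cases hxw : x = w
    · subst hxw
      exfalso
      rcases reflTransGen_iff_eq_or_transGen.1 hRT with hh | hT
      · exact hvw.ne hh.symm
      · obtain ⟨c, -, hstep⟩ := (Relation.TransGen.tail'_iff).1 hT
        exact hsrc c hstep
    · have hx : x ∉ ({v, w} : Set V) := fun hh => (mem_I.1 hh).elim hxv hxw
      rcases hO x (isSource_of_isSource_del hx hsrc) with h | h
      · exact Or.inl h
      · exact Or.inr (isol_del_of_isol h)

theorem good_con_caseC (hvw : G.Adj v w)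
    {O : AcyclicOrientation G} (hO : GoodOri G v O)
    {hv' : ¬ Relation.ReflTransGen (del v w O).dir v w}
    {hw' : ¬ Relation.ReflTransGen (del v w O).dir w v} :
    GoodOri (contractGraph G {v, w} v) v (conOri (del v w O) hvw hv' hw') := by
  intro x hsrc
  by_cases hxv : x = v
  · exact Or.inl hxv
  · by_cases hxw : x = w
    · subst hxw; exact Or.inr (isol_con_w hvw.ne)
    · have hx : x ∉ ({v, w} : Set V) := fun hh => (mem_I.1 hh).elim hxv hxw
      have hsrc' : (del v w O).IsSource x := by
        intro a ha
        by_cases haI : a ∈ ({v, w} : Set V)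
        · exact hsrc v (Or.inr (Or.inl ⟨rfl, hx, a, haI, ha⟩))
        · exact hsrc a (Or.inl ⟨haI, hx, ha⟩)
      rcases hO x (isSource_of_isSource_del hx hsrc') with h | h
      · exact Or.inl h
      · exact Or.inr (isol_con_of_isol hvw h)

section DecEq

variable [DecidableEq V]

theorem pi_memI {z : V} (hne : v ≠ w) (hz : z ∈ ({v, w} : Set V)) : piMap v w z = v := by
  rcases mem_I.1 hz with rfl | rfl
  · exact piMap_v hne
  · exact piMap_w

theorem pi_notmem {z : V} (hz : z ∉ ({v, w} : Set V)) : piMap v w z = z :=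
  piMap_of_ne (fun hh => hz (mem_I.2 (Or.inr hh)))

theorem good_ext_pullb (hvw : G.Adj v w) (hcyc : (G.deleteEdges {s(v,w)}).Reachable v w)
    {O'' : AcyclicOrientation (contractGraph G {v, w} v)} (hO'' : GoodOri (contractGraph G {v, w} v) v O'')
    {hno : ¬ Relation.ReflTransGen (pullb hvw O'').dir w v} :
    GoodOri G v (extOri (pullb hvw O'') v w hvw rfl hno) := by
  intro x hsrc
  by_cases hxv : x = v
  · exact Or.inl hxv
  · have hxw : x ≠ w := by
      rintro rfl
      exact hsrc v (Or.inr ⟨rfl, rfl⟩)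
    have hx : x ∉ ({v, w} : Set V) := fun hh => (mem_I.1 hh).elim hxv hxw
    have hsrc' : (pullb hvw O'').IsSource x := fun a ha => hsrc a (Or.inl ha)
    have hsrc'' : O''.IsSource x := by
      intro a ha
      obtain ⟨hne', hcl⟩ := O''.dir_adj ha
      rcases hcl with ⟨haI, hxI, hG⟩ | ⟨hav, hxI, z, hzI, hG⟩ | ⟨hxv', -, -⟩
      · refine hsrc' a ⟨adj_del_of_notmem hG haI, ?_⟩
        rw [pi_notmem haI, pi_notmem hxI]
        exact ha
      · refine hsrc' z ⟨adj_del_of_notmem' hG hxI, ?_⟩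
        rw [pi_memI hvw.ne hzI, pi_notmem hxI]
        rw [hav] at ha
        exact ha
      · exact hxv hxv'
    rcases hO'' x hsrc'' with h | h
    · exact Or.inl h
    · exact Or.inr (isol_of_isol_con hx h)

end DecEq

theorem good_ext (hvw : G.Adj v w) (hcyc : (G.deleteEdges {s(v,w)}).Reachable v w)
    {O' : AcyclicOrientation (G.deleteEdges {s(v,w)})}
    (hO' : GoodOri (G.deleteEdges {s(v,w)}) v O')
    {x y : V} {hxy : G.Adj x y} {he : s(x,y) = s(v,w)}
    {hno : ¬ Relation.ReflTransGen O'.dir y x} :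
    GoodOri G v (extOri O' x y hxy he hno) := by
  intro z hsrc
  have hsrc' : O'.IsSource z := fun a ha => hsrc a (Or.inl ha)
  rcases hO' z hsrc' with h | h
  · exact Or.inl h
  · exact Or.inr (isol_of_isol_del hvw hcyc h)

/-! round trips -/

theorem del_extOri {O' : AcyclicOrientation (G.deleteEdges {s(v,w)})} {x y : V}
    {hxy : G.Adj x y} {he : s(x,y) = s(v,w)} {hno : ¬ Relation.ReflTransGen O'.dir y x} :
    del v w (extOri O' x y hxy he hno) = O' := by
  refine AcyclicOrientation.ext' fun a b => ?_
  constructor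
  · rintro ⟨hadj, (h | ⟨rfl, rfl⟩)⟩
    · exact h
    · exact absurd he (adj_del_iff.1 hadj).2
  · intro h
    exact ⟨O'.dir_adj h, Or.inl h⟩

theorem ext_del {O : AcyclicOrientation G} {x y : V} (hdir : O.dir x y)
    (he : s(x,y) = s(v,w))
    {hno : ¬ Relation.ReflTransGen (del v w O).dir y x} :
    extOri (del v w O) x y (O.dir_adj hdir) he hno = O := by
  refine AcyclicOrientation.ext' fun a b => ?_
  constructor
  · rintro (⟨-, h⟩ | ⟨rfl, rfl⟩)
    · exact h
    · exact hdir
  · intro h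
    by_cases hs : s(a, b) = s(v, w)
    · rw [← he] at hs
      rcases Sym2.eq_iff.1 hs with ⟨rfl, rfl⟩ | ⟨rfl, rfl⟩
      · exact Or.inr ⟨rfl, rfl⟩
      · exact absurd hdir (O.not_dir_of_dir h)
    · exact Or.inl ⟨adj_del_iff.2 ⟨O.dir_adj h, hs⟩, h⟩

theorem extOri_congr {O1 O2 : AcyclicOrientation (G.deleteEdges {s(v,w)})} (h : O1 = O2)
    {x y : V} {hxy : G.Adj x y} {he : s(x,y) = s(v,w)}
    {hno1 : ¬ Relation.ReflTransGen O1.dir y x} {hno2 : ¬ Relation.ReflTransGen O2.dir y x} :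
    extOri O1 x y hxy he hno1 = extOri O2 x y hxy he hno2 := by
  subst h; rfl

section DecEq2

variable [DecidableEq V]

theorem conOri_congr {O1 O2 : AcyclicOrientation (G.deleteEdges {s(v,w)})} (h : O1 = O2)
    (hvw : G.Adj v w)
    {hv1 : ¬ Relation.ReflTransGen O1.dir v w} {hw1 : ¬ Relation.ReflTransGen O1.dir w v}
    {hv2 : ¬ Relation.ReflTransGen O2.dir v w} {hw2 : ¬ Relation.ReflTransGen O2.dir w v} :
    conOri O1 hvw hv1 hw1 = conOri O2 hvw hv2 hw2 := by
  subst h; rfl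

theorem conOri_pullb (hvw : G.Adj v w)
    {O'' : AcyclicOrientation (contractGraph G {v, w} v)}
    {hv' : ¬ Relation.ReflTransGen (pullb hvw O'').dir v w}
    {hw' : ¬ Relation.ReflTransGen (pullb hvw O'').dir w v} :
    conOri (pullb hvw O'') hvw hv' hw' = O'' := by
  refine AcyclicOrientation.ext' fun a b => ?_
  constructor
  · rintro (⟨ha, hb, ⟨hadj, hd⟩⟩ | ⟨ha, hb, z, hzI, ⟨hadj, hd⟩⟩ | ⟨hb, ha, z, hzI, ⟨hadj, hd⟩⟩)
    · rwa [pi_notmem ha, pi_notmem hb] at hd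
    · rw [pi_memI hvw.ne hzI, pi_notmem hb] at hd
      rw [ha]
      exact hd
    · rw [pi_memI hvw.ne hzI, pi_notmem ha] at hd
      rw [hb]
      exact hd
  · intro hd
    obtain ⟨hne', hcl⟩ := O''.dir_adj hd
    rcases hcl with ⟨ha, hb, hG⟩ | ⟨ha, hb, z, hzI, hG⟩ | ⟨hb, ha, z, hzI, hG⟩
    · exact Or.inl ⟨ha, hb, ⟨adj_del_of_notmem hG ha,
        by rw [pi_notmem ha, pi_notmem hb]; exact hd⟩⟩
    · subst ha
      refine Or.inr (Or.inl ⟨rfl, hb, z, hzI, ⟨adj_del_of_notmem' hG hb, ?_⟩⟩)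
      rw [pi_memI hvw.ne hzI, pi_notmem hb]
      exact hd
    · subst hb
      refine Or.inr (Or.inr ⟨rfl, ha, z, hzI, ⟨adj_del_of_notmem hG.symm ha, ?_⟩⟩)
      rw [pi_memI hvw.ne hzI, pi_notmem ha]
      exact hd

theorem two_I_no_trans {O' : AcyclicOrientation (G.deleteEdges {s(v,w)})}
    (hv' : ¬ Relation.ReflTransGen O'.dir v w) (hw' : ¬ Relation.ReflTransGen O'.dir w v)
    {z a : V} (hz : z ∈ ({v, w} : Set V)) (ha : a ∈ ({v, w} : Set V))
    (hT : Relation.TransGen O'.dir z a) : False := by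
  rcases mem_I.1 hz with rfl | rfl <;> rcases mem_I.1 ha with rfl | rfl
  · exact O'.acyclic _ hT
  · exact hv' hT.to_reflTransGen
  · exact hw' hT.to_reflTransGen
  · exact O'.acyclic _ hT

theorem pullb_conOri (hvw : G.Adj v w)
    {O' : AcyclicOrientation (G.deleteEdges {s(v,w)})}
    (hv' : ¬ Relation.ReflTransGen O'.dir v w) (hw' : ¬ Relation.ReflTransGen O'.dir w v) :
    pullb hvw (conOri O' hvw hv' hw') = O' := by
  refine AcyclicOrientation.ext' fun a b => ?_
  constructor
  · rintro ⟨hadj, hC⟩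
    by_cases haI : a ∈ ({v, w} : Set V) <;> by_cases hbI : b ∈ ({v, w} : Set V)
    · exact absurd hadj (no_adj_del_I haI hbI)
    · rw [pi_memI hvw.ne haI, pi_notmem hbI] at hC
      rcases hC with ⟨hvI, -, -⟩ | ⟨-, -, z, hzI, hd⟩ | ⟨hbv, -, -⟩
      · exact absurd (mem_I.2 (Or.inl rfl)) hvI
      · by_cases hza : z = a
        · rw [hza] at hd; exact hd
        · refine O'.dir_of_not_dir hadj (fun hba => ?_)
          exact two_I_no_trans hv' hw' hzI haI
            ((Relation.TransGen.single hd).tail hba)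
      · exact absurd (mem_I.2 (Or.inl hbv)) hbI
    · rw [pi_notmem haI, pi_memI hvw.ne hbI] at hC
      rcases hC with ⟨-, hvI, -⟩ | ⟨hav, -, -⟩ | ⟨-, -, z, hzI, hd⟩
      · exact absurd (mem_I.2 (Or.inl rfl)) hvI
      · exact absurd (mem_I.2 (Or.inl hav)) haI
      · by_cases hzb : z = b
        · rw [hzb] at hd; exact hd
        · refine O'.dir_of_not_dir hadj (fun hba => ?_)
          exact two_I_no_trans hv' hw' hbI hzI
            ((Relation.TransGen.single hba).tail hd)
    · rw [pi_notmem haI, pi_notmem hbI] at hC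
      rcases hC with ⟨-, -, hd⟩ | ⟨hav, -, -⟩ | ⟨hbv, -, -⟩
      · exact hd
      · exact absurd (mem_I.2 (Or.inl hav)) haI
      · exact absurd (mem_I.2 (Or.inl hbv)) hbI
  · intro hd
    have hadj : (G.deleteEdges {s(v,w)}).Adj a b := O'.dir_adj hd
    refine ⟨hadj, ?_⟩
    by_cases haI : a ∈ ({v, w} : Set V) <;> by_cases hbI : b ∈ ({v, w} : Set V)
    · exact absurd hadj (no_adj_del_I haI hbI)
    · rw [pi_memI hvw.ne haI, pi_notmem hbI]
      exact Or.inr (Or.inl ⟨rfl, hbI, a, haI, hd⟩)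
    · rw [pi_notmem haI, pi_memI hvw.ne hbI]
      exact Or.inr (Or.inr ⟨rfl, haI, b, hbI, hd⟩)
    · rw [pi_notmem haI, pi_notmem hbI]
      exact Or.inl ⟨haI, hbI, hd⟩

end DecEq2

end DelCon

/-! ### The bijection and the main theorem -/

namespace DelCon

open Relation AcyclicOrientation

variable {G : SimpleGraph V} {v w : V}

theorem hv'_of_dir_wv {O : AcyclicOrientation G} (hvw : G.Adj v w) (h1 : O.dir w v) :
    ¬ Relation.ReflTransGen (del v w O).dir v w := by
  intro hr
  rcases reflTransGen_iff_eq_or_transGen.1 hr with hh | hT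
  · exact hvw.ne hh.symm
  · exact O.acyclic w ((TransGen.single h1).trans (TransGen.mono (fun _ _ hh => hh.2) _ _ hT))

theorem hw'_of_not_dir_wv {O : AcyclicOrientation G} (hvw : G.Adj v w) (h1 : ¬ O.dir w v) :
    ¬ Relation.ReflTransGen (del v w O).dir w v := by
  have hdvw : O.dir v w := O.dir_of_not_dir hvw h1
  intro hr
  rcases reflTransGen_iff_eq_or_transGen.1 hr with hh | hT
  · exact hvw.ne hh
  · exact O.acyclic v ((TransGen.single hdvw).trans (TransGen.mono (fun _ _ hh => hh.2) _ _ hT))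

theorem no_both_rtg {O' : AcyclicOrientation (G.deleteEdges {s(v,w)})} (hne : v ≠ w)
    (h : Relation.ReflTransGen O'.dir v w) : ¬ Relation.ReflTransGen O'.dir w v := by
  intro hr
  rcases reflTransGen_iff_eq_or_transGen.1 h with hh | hT
  · exact hne hh.symm
  · rcases reflTransGen_iff_eq_or_transGen.1 hr with hh | hT'
    · exact hne hh
    · exact O'.acyclic v (hT.trans hT')

section Main

variable [DecidableEq V]

theorem pullb_not_rtg_vw (hvw : G.Adj v w)
    (O'' : AcyclicOrientation (contractGraph G {v, w} v)) :
    ¬ Relation.ReflTransGen (pullb hvw O'').dir v w := by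
  intro hr
  rcases reflTransGen_iff_eq_or_transGen.1 hr with hh | hT
  · exact hvw.ne hh.symm
  · have : TransGen O''.dir (piMap v w v) (piMap v w w) :=
      TransGen.lift (piMap v w) (fun _ _ hh => hh.2) _ _ hT
    rw [piMap_v hvw.ne, piMap_w] at this
    exact O''.acyclic v this

theorem pullb_not_rtg_wv (hvw : G.Adj v w)
    (O'' : AcyclicOrientation (contractGraph G {v, w} v)) :
    ¬ Relation.ReflTransGen (pullb hvw O'').dir w v := by
  intro hr
  rcases reflTransGen_iff_eq_or_transGen.1 hr with hh | hT
  · exact hvw.ne hh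
  · have : TransGen O''.dir (piMap v w w) (piMap v w v) :=
      TransGen.lift (piMap v w) (fun _ _ hh => hh.2) _ _ hT
    rw [piMap_v hvw.ne, piMap_w] at this
    exact O''.acyclic v this

open Classical in
/-- The deletion-contraction map on good orientations. -/
noncomputable def Fmap (hvw : G.Adj v w) (hcyc : (G.deleteEdges {s(v,w)}).Reachable v w)
    (p : {O : AcyclicOrientation G // GoodOri G v O}) :
    {O' : AcyclicOrientation (G.deleteEdges {s(v,w)}) //
        GoodOri (G.deleteEdges {s(v,w)}) v O'} ⊕
      {O'' : AcyclicOrientation (contractGraph G {v, w} v) //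
        GoodOri (contractGraph G {v, w} v) v O''} :=
  if h1 : p.1.dir w v then Sum.inl ⟨del v w p.1, good_del_caseA hvw hcyc p.2 h1⟩
  else if h2 : Relation.ReflTransGen (del v w p.1).dir v w then
    Sum.inl ⟨del v w p.1, good_del_caseB hvw hcyc p.2 h2⟩
  else Sum.inr ⟨conOri (del v w p.1) hvw h2 (hw'_of_not_dir_wv hvw h1),
    good_con_caseC hvw p.2⟩

theorem Fmap_inj (hvw : G.Adj v w) (hcyc : (G.deleteEdges {s(v,w)}).Reachable v w) :
    Function.Injective (Fmap hvw hcyc) := by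
  rintro ⟨O1, g1⟩ ⟨O2, g2⟩ h
  apply Subtype.ext
  simp only [Fmap] at h
  by_cases h1 : O1.dir w v <;> by_cases h2 : O2.dir w v
  · rw [dif_pos h1, dif_pos h2] at h
    simp only [Sum.inl.injEq, Subtype.mk.injEq] at h
    calc O1 = extOri (del v w O1) w v (O1.dir_adj h1) Sym2.eq_swap
          (hv'_of_dir_wv hvw h1) := (ext_del h1 Sym2.eq_swap).symm
    _ = extOri (del v w O2) w v (O1.dir_adj h1) Sym2.eq_swap
          (h ▸ hv'_of_dir_wv hvw h1) := extOri_congr h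
    _ = O2 := ext_del h2 Sym2.eq_swap
  · rw [dif_pos h1, dif_neg h2] at h
    by_cases h3 : Relation.ReflTransGen (del v w O2).dir v w
    · rw [dif_pos h3] at h
      simp only [Sum.inl.injEq, Subtype.mk.injEq] at h
      rw [← h] at h3
      exact absurd h3 (hv'_of_dir_wv hvw h1)
    · rw [dif_neg h3] at h
      simp at h
  · rw [dif_neg h1, dif_pos h2] at h
    by_cases h3 : Relation.ReflTransGen (del v w O1).dir v w
    · rw [dif_pos h3] at h
      simp only [Sum.inl.injEq, Subtype.mk.injEq] at h
      rw [h] at h3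
      exact absurd h3 (hv'_of_dir_wv hvw h2)
    · rw [dif_neg h3] at h
      simp at h
  · rw [dif_neg h1, dif_neg h2] at h
    have hd1 : O1.dir v w := O1.dir_of_not_dir hvw h1
    have hd2 : O2.dir v w := O2.dir_of_not_dir hvw h2
    by_cases h3 : Relation.ReflTransGen (del v w O1).dir v w <;>
      by_cases h4 : Relation.ReflTransGen (del v w O2).dir v w
    · rw [dif_pos h3, dif_pos h4] at h
      simp only [Sum.inl.injEq, Subtype.mk.injEq] at h
      calc O1 = extOri (del v w O1) v w (O1.dir_adj hd1) rfl
            (hw'_of_not_dir_wv hvw h1) := (ext_del hd1 rfl).symm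
      _ = extOri (del v w O2) v w (O1.dir_adj hd1) rfl
            (h ▸ hw'_of_not_dir_wv hvw h1) := extOri_congr h
      _ = O2 := ext_del hd2 rfl
    · rw [dif_pos h3, dif_neg h4] at h
      simp at h
    · rw [dif_neg h3, dif_pos h4] at h
      simp at h
    · rw [dif_neg h3, dif_neg h4] at h
      simp only [Sum.inr.injEq, Subtype.mk.injEq] at h
      have hdel : del v w O1 = del v w O2 := by
        have := congrArg (pullb hvw) h
        rwa [pullb_conOri hvw, pullb_conOri hvw] at this
      calc O1 = extOri (del v w O1) v w (O1.dir_adj hd1) rfl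
            (hw'_of_not_dir_wv hvw h1) := (ext_del hd1 rfl).symm
      _ = extOri (del v w O2) v w (O1.dir_adj hd1) rfl
            (hdel ▸ hw'_of_not_dir_wv hvw h1) := extOri_congr hdel
      _ = O2 := ext_del hd2 rfl

theorem Fmap_surj (hvw : G.Adj v w) (hcyc : (G.deleteEdges {s(v,w)}).Reachable v w) :
    Function.Surjective (Fmap hvw hcyc) := by
  rintro (⟨O', hO'⟩ | ⟨O'', hO''⟩)
  · by_cases h : Relation.ReflTransGen O'.dir v w
    · have hno : ¬ Relation.ReflTransGen O'.dir w v := no_both_rtg hvw.ne h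
      refine ⟨⟨extOri O' v w hvw rfl hno, good_ext hvw hcyc hO'⟩, ?_⟩
      have hne1 : ¬ (extOri O' v w hvw rfl hno).dir w v := by
        rintro (hd | ⟨hh, -⟩)
        · exact hno (ReflTransGen.single hd)
        · exact hvw.ne hh.symm
      have hrt : Relation.ReflTransGen
          (del v w (extOri O' v w hvw rfl hno)).dir v w := by
        rw [del_extOri]; exact h
      simp only [Fmap]
      rw [dif_neg hne1, dif_pos hrt]
      exact congrArg Sum.inl (Subtype.ext del_extOri)
    · refine ⟨⟨extOri O' w v hvw.symm Sym2.eq_swap h, good_ext hvw hcyc hO'⟩, ?_⟩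
      have h1 : (extOri O' w v hvw.symm Sym2.eq_swap h).dir w v := Or.inr ⟨rfl, rfl⟩
      simp only [Fmap]
      rw [dif_pos h1]
      exact congrArg Sum.inl (Subtype.ext del_extOri)
  · have hno := pullb_not_rtg_wv hvw O''
    refine ⟨⟨extOri (pullb hvw O'') v w hvw rfl hno, good_ext_pullb hvw hcyc hO''⟩, ?_⟩
    have hne1 : ¬ (extOri (pullb hvw O'') v w hvw rfl hno).dir w v := by
      rintro (hd | ⟨hh, -⟩)
      · exact hno (ReflTransGen.single hd)
      · exact hvw.ne hh.symm
    have hne2 : ¬ Relation.ReflTransGen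
        (del v w (extOri (pullb hvw O'') v w hvw rfl hno)).dir v w := by
      rw [del_extOri]; exact pullb_not_rtg_vw hvw O''
    simp only [Fmap]
    rw [dif_neg hne1, dif_neg hne2]
    refine congrArg Sum.inr (Subtype.ext ?_)
    calc conOri (del v w (extOri (pullb hvw O'') v w hvw rfl hno)) hvw hne2
          (hw'_of_not_dir_wv hvw hne1)
        = conOri (pullb hvw O'') hvw (pullb_not_rtg_vw hvw O'') (pullb_not_rtg_wv hvw O'') :=
          conOri_congr del_extOri hvw
    _ = O'' := conOri_pullb hvw

theorem final_card [Finite V] (hvw : G.Adj v w)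
    (hcyc : (G.deleteEdges {s(v,w)}).Reachable v w) :
    Nat.card {O : AcyclicOrientation G // GoodOri G v O} =
      Nat.card {O' : AcyclicOrientation (G.deleteEdges {s(v,w)}) //
          GoodOri (G.deleteEdges {s(v,w)}) v O'} +
        Nat.card {O'' : AcyclicOrientation (contractGraph G {v, w} v) //
          GoodOri (contractGraph G {v, w} v) v O''} := by
  rw [← Nat.card_sum]
  exact Nat.card_eq_of_bijective _ ⟨Fmap_inj hvw hcyc, Fmap_surj hvw hcyc⟩

end Main

end DelCon

/-- Deletion–contraction recursion for `κ` at a cycle-edge. -/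
theorem kappa_deletion_contraction [Fintype V] [DecidableEq V] (G : SimpleGraph V)
    (hconn : G.Connected) (v w : V) (hvw : G.Adj v w)
    (hcyc : (G.deleteEdges {s(v,w)}).Reachable v w) :
    kappa G = kappa (G.deleteEdges {s(v,w)}) + kappa (contractGraph G {v, w} v) := by
  have hqG : ∀ x, ¬ Isol G x → G.Reachable v x := fun x _ => hconn.preconnected v x
  have hqG' : ∀ x, ¬ Isol (G.deleteEdges {s(v,w)}) x →
      (G.deleteEdges {s(v,w)}).Reachable v x :=
    fun x _ => DelCon.reach_del hcyc (hconn.preconnected v x)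
  have hqG'' : ∀ x, ¬ Isol (contractGraph G {v, w} v) x →
      (contractGraph G {v, w} v).Reachable v x := by
    intro x hx
    have hxw : x ≠ w := by
      rintro rfl
      exact hx (DelCon.isol_con_w hvw.ne)
    have := DelCon.reach_con hvw.ne (hconn.preconnected v x)
    rwa [DelCon.piMap_v hvw.ne, DelCon.piMap_of_ne hxw] at this
  rw [AcyclicOrientation.kappa_eq_card hqG, AcyclicOrientation.kappa_eq_card hqG',
    AcyclicOrientation.kappa_eq_card hqG'']
  exact DelCon.final_card hvw hcyc
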